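/- Let L be a graph Laplacian with eigenvalues 0 = λ_1 < λ_2 ≤ ... ≤ λ_n and α > 2 a real number. For any s ∈ R^n with ||s|| ≤ R, the polarization-disagreement index with homogeneous stubbornness K = αI, namely PD(α) = s̄^T (I + α^{-1}L)^{-1}(I+L)(I + α^{-1}L)^{-1} s̄ where s̄ = s - ((s^T 1)/n)·1, satisfies PD(α) ≤ R^2 α^2 / (4(α-1)). -/

import Mathlib

open Matrix

theorem stmt4 {n : ℕ} (L : Matrix (Fin n) (Fin n) ℝ)
    (hL : L.PosSemidef) (hL1 : L *ᵥ 1 = 0)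
    (α R : ℝ) (hα : 2 < α) (s : Fin n → ℝ) (hs : Real.sqrt (s ⬝ᵥ s) ≤ R) :
    let sb := s - ((s ⬝ᵥ (1 : Fin n → ℝ)) / (n : ℝ)) • (1 : Fin n → ℝ)
    sb ⬝ᵥ (((1 + α⁻¹ • L)⁻¹ * (1 + L) * (1 + α⁻¹ • L)⁻¹) *ᵥ sb)
      ≤ R ^ 2 * α ^ 2 / (4 * (α - 1)) := by
  intro sb
  have hα0 : (0:ℝ) < α := by linarith
  have hα1 : (0:ℝ) < α - 1 := by linarith
  set c : ℝ := α ^ 2 / (4 * (α - 1)) with hc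
  have hc0 : 0 < c := by positivity
  -- auxiliary: nonneg smul of PSD is PSD
  have hsmulPSD : ∀ (t : ℝ), 0 ≤ t → ∀ M : Matrix (Fin n) (Fin n) ℝ,
      M.PosSemidef → (t • M).PosSemidef := by
    intro t ht M hM
    have hherm : (t • M).IsHermitian := by
      show (t • M)ᴴ = t • M
      rw [conjTranspose_smul, hM.1.eq]
      simp
    refine .of_dotProduct_mulVec_nonneg hherm fun x => ?_
    rw [smul_mulVec, dotProduct_smul, smul_eq_mul]
    exact mul_nonneg ht (hM.dotProduct_mulVec_nonneg x)
  set A : Matrix (Fin n) (Fin n) ℝ := 1 + α⁻¹ • L with hAdef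
  have hLsmul : (α⁻¹ • L).PosSemidef := hsmulPSD _ (by positivity) _ hL
  have hA : A.PosDef := Matrix.PosDef.one.add_posSemidef hLsmul
  have hdet : IsUnit A.det := (Matrix.isUnit_iff_isUnit_det A).mp hA.isUnit
  have hinv1 : A⁻¹ * A = 1 := Matrix.nonsing_inv_mul A hdet
  have hinv2 : A * A⁻¹ = 1 := Matrix.mul_nonsing_inv A hdet
  have hAinvH : (A⁻¹)ᴴ = A⁻¹ := (hA.isHermitian.inv).eq
  have hLT : Lᵀ = L := by simpa using hL.1.eq
  have hαne : α ≠ 0 := hα0.ne'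
  have hα1ne : α - 1 ≠ 0 := hα1.ne'
  have h4ne : (-4 : ℝ) + α * 4 ≠ 0 := by nlinarith
  set B : Matrix (Fin n) (Fin n) ℝ := L - (α - 2) • 1 with hBdef
  have hBH : Bᴴ = B := by
    simp [hBdef, conjTranspose_sub, hL.1.eq, hLT]
  have hBB : (B * B).PosSemidef := by
    have := Matrix.posSemidef_conjTranspose_mul_self B
    rwa [hBH] at this
  have hS : ((c / α ^ 2) • (B * B)).PosSemidef := hsmulPSD _ (by positivity) _ hBB
  -- the key algebraic identity
  have key : c • (A * A) - (1 + L) = (c / α ^ 2) • (B * B) := by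
    rw [hAdef, hBdef]
    simp only [mul_add, add_mul, mul_sub, sub_mul, Matrix.smul_mul, Matrix.mul_smul,
      Matrix.mul_one, Matrix.one_mul, smul_smul, smul_add, smul_sub]
    match_scalars <;> (rw [hc]; field_simp) <;> ring
  have hAAA : A⁻¹ * (A * A) * A⁻¹ = 1 := by
    rw [← Matrix.mul_assoc, hinv1, Matrix.one_mul, hinv2]
  have hEq : c • (1 : Matrix (Fin n) (Fin n) ℝ) - A⁻¹ * (1 + L) * A⁻¹
      = A⁻¹ * ((c / α ^ 2) • (B * B)) * A⁻¹ := by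
    rw [← key]
    have h2 : A⁻¹ * (c • (A * A) - (1 + L)) * A⁻¹
        = c • (A⁻¹ * (A * A) * A⁻¹) - A⁻¹ * (1 + L) * A⁻¹ := by
      rw [Matrix.mul_sub, Matrix.sub_mul, Matrix.mul_smul, Matrix.smul_mul, Matrix.mul_assoc]
    rw [h2, hAAA]
  have hM1 : (A⁻¹ * ((c / α ^ 2) • (B * B)) * A⁻¹).PosSemidef := by
    have := hS.mul_mul_conjTranspose_same A⁻¹
    rwa [hAinvH] at this
  have hPSD : (c • (1 : Matrix (Fin n) (Fin n) ℝ) - A⁻¹ * (1 + L) * A⁻¹).PosSemidef := by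
    rw [hEq]; exact hM1
  have hq := hPSD.dotProduct_mulVec_nonneg sb
  have hquad : sb ⬝ᵥ ((A⁻¹ * (1 + L) * A⁻¹) *ᵥ sb) ≤ c * (sb ⬝ᵥ sb) := by
    have h3 : (star sb) ⬝ᵥ ((c • (1 : Matrix (Fin n) (Fin n) ℝ) - A⁻¹ * (1 + L) * A⁻¹) *ᵥ sb)
        = c * (sb ⬝ᵥ sb) - sb ⬝ᵥ ((A⁻¹ * (1 + L) * A⁻¹) *ᵥ sb) := by
      simp [sub_mulVec, dotProduct_sub, smul_mulVec, one_mulVec, dotProduct_smul,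
        smul_eq_mul, star_trivial]
    rw [h3] at hq
    linarith
  -- ‖sb‖² ≤ ‖s‖²
  have hsb : sb ⬝ᵥ sb ≤ s ⬝ᵥ s := by
    rcases Nat.eq_zero_or_pos n with h0 | hn
    · subst h0
      simp [dotProduct]
    · have hn0 : (n : ℝ) ≠ 0 := by positivity
      have h1 : (1 : Fin n → ℝ) ⬝ᵥ (1 : Fin n → ℝ) = (n : ℝ) := by
        simp [dotProduct]
      set t : ℝ := s ⬝ᵥ (1 : Fin n → ℝ) with ht
      have expand : sb ⬝ᵥ sb = s ⬝ᵥ s - t ^ 2 / n := by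
        show (s - (t / n) • 1) ⬝ᵥ (s - (t / n) • 1) = s ⬝ᵥ s - t ^ 2 / n
        rw [dotProduct_sub, sub_dotProduct, sub_dotProduct, dotProduct_smul, dotProduct_smul,
          smul_dotProduct, smul_dotProduct, h1, dotProduct_comm (1 : Fin n → ℝ) s, ← ht]
        simp only [smul_eq_mul]
        field_simp
        ring
      rw [expand]
      have : 0 ≤ t ^ 2 / n := by positivity
      linarith
  have hss0 : 0 ≤ s ⬝ᵥ s := by
    apply Finset.sum_nonneg
    intro i _
    exact mul_self_nonneg _
  have hR0 : 0 ≤ R := le_trans (Real.sqrt_nonneg _) hs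
  have hss : s ⬝ᵥ s ≤ R ^ 2 := by
    have := Real.sq_sqrt hss0
    nlinarith [Real.sqrt_nonneg (s ⬝ᵥ s)]
  calc sb ⬝ᵥ ((A⁻¹ * (1 + L) * A⁻¹) *ᵥ sb) ≤ c * (sb ⬝ᵥ sb) := hquad
    _ ≤ c * R ^ 2 := by
        apply mul_le_mul_of_nonneg_left _ hc0.le
        exact le_trans hsb hss
    _ = R ^ 2 * α ^ 2 / (4 * (α - 1)) := by rw [hc]; ring
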